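/- For each n ≥ 2 and every (x_1,…,x_n) ∈ [1,q)^n, the functions f_n^k satisfy ∑_{k=1}^n f_n^k(x_1,…,x_n) = 1. -/

import Mathlib

open Finset

/-- `ω(x,y) = (q²(x+y) − 2qxy)/(q² − xy)`. -/
noncomputable def omegaFn (q x y : ℝ) : ℝ := (q ^ 2 * (x + y) - 2 * q * x * y) / (q ^ 2 - x * y)

/-- `f(x,y) = (q²x − qxy)/(q²(x+y) − 2qxy)`. -/
noncomputable def fFn (q x y : ℝ) : ℝ := (q ^ 2 * x - q * x * y) / (q ^ 2 * (x + y) - 2 * q * x * y)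

/-- The iterated functions `ω_n`: `ω_1(x) = x`,
`ω_n(x_1,…,x_n) = ω(x_n, ω_{n−1}(x_1,…,x_{n−1}))` (so that
`ω_2(x_1,x_2) = ω(x_1,x_2)` by symmetry of `ω`). -/
noncomputable def omegaIter (q : ℝ) : (n : ℕ) → (Fin n → ℝ) → ℝ
  | 0, _ => 0
  | 1, x => x 0
  | n + 2, x =>
      omegaFn q (x (Fin.last (n + 1))) (omegaIter q (n + 1) (fun i => x i.castSucc))

/-- The iterated functions `f_n = (f_n^1,…,f_n^n)`: `f_1 ≡ 1`,
`f_n^k(x_1,…,x_n) = f_{n−1}^k(x_1,…,x_{n−1})·f(ω_{n−1}(x_1,…,x_{n−1}),x_n)`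
for `k ≤ n−1`, and `f_n^n(x_1,…,x_n) = f(x_n, ω_{n−1}(x_1,…,x_{n−1}))`
(so that `f_2(x_1,x_2) = (f(x_1,x_2), f(x_2,x_1))`). -/
noncomputable def fIter (q : ℝ) : (n : ℕ) → (Fin n → ℝ) → Fin n → ℝ
  | 0, _ => fun k => 1
  | 1, _ => fun k => 1
  | n + 2, x => fun k =>
      if h : k = Fin.last (n + 1) then
        fFn q (x (Fin.last (n + 1))) (omegaIter q (n + 1) (fun i => x i.castSucc))
      else
        fIter q (n + 1) (fun i => x i.castSucc) (k.castPred h) *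
          fFn q (omegaIter q (n + 1) (fun i => x i.castSucc)) (x (Fin.last (n + 1)))

/-- For every `n ≥ 2` and `(x_1,…,x_n) ∈ [1,q)^n`, the coordinates of `f_n`
sum to one: `∑_{k=1}^n f_n^k(x_1,…,x_n) = 1`. -/
lemma omegaFn_mem {q a b : ℝ} (hq : 0 < q) (ha : 0 < a) (ha' : a < q)
    (hb : 0 < b) (hb' : b < q) : 0 < omegaFn q a b ∧ omegaFn q a b < q := by
  have hD : 0 < q ^ 2 - a * b := by nlinarith
  have hN : 0 < q ^ 2 * (a + b) - 2 * q * a * b := by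
    nlinarith [mul_pos hq (mul_pos ha (sub_pos.mpr hb')),
      mul_pos hq (mul_pos hb (sub_pos.mpr ha'))]
  constructor
  · exact div_pos hN hD
  · rw [omegaFn, div_lt_iff₀ hD]
    nlinarith [mul_pos hq (mul_pos (sub_pos.mpr ha') (sub_pos.mpr hb'))]

lemma omegaIter_mem (q : ℝ) (hq : 0 < q) : ∀ m (x : Fin (m + 1) → ℝ),
    (∀ i, 0 < x i ∧ x i < q) →
    0 < omegaIter q (m + 1) x ∧ omegaIter q (m + 1) x < q := by
  intro m
  induction m with
  | zero => intro x hx; simpa [omegaIter] using hx 0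
  | succ m ih =>
      intro x hx
      have h := ih (fun i => x i.castSucc) (fun i => hx _)
      exact omegaFn_mem hq (hx _).1 (hx _).2 h.1 h.2

lemma fFn_add {q a b : ℝ} (hq : 0 < q) (ha : 0 < a) (ha' : a < q)
    (hb : 0 < b) (hb' : b < q) : fFn q a b + fFn q b a = 1 := by
  have hD : (0:ℝ) < q ^ 2 * (a + b) - 2 * q * a * b := by
    nlinarith [mul_pos hq (mul_pos ha (sub_pos.mpr hb')),
      mul_pos hq (mul_pos hb (sub_pos.mpr ha'))]
  have hD2 : q ^ 2 * (b + a) - 2 * q * b * a = q ^ 2 * (a + b) - 2 * q * a * b := by ring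
  rw [fFn, fFn, hD2, ← add_div, div_eq_one_iff_eq (ne_of_gt hD)]
  ring

lemma sum_fIter_aux (q : ℝ) (hq : 0 < q) : ∀ m (x : Fin (m + 1) → ℝ),
    (∀ i, 0 < x i ∧ x i < q) → ∑ k, fIter q (m + 1) x k = 1 := by
  intro m
  induction m with
  | zero => intro x hx; simp [fIter]
  | succ m ih =>
      intro x hx
      have hω := omegaIter_mem q hq m (fun i => x i.castSucc) (fun i => hx _)
      rw [Fin.sum_univ_castSucc]
      have hlast : ∀ i : Fin (m + 1),
          fIter q (m + 2) x i.castSucc =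
            fIter q (m + 1) (fun i => x i.castSucc) i *
              fFn q (omegaIter q (m + 1) (fun i => x i.castSucc))
                (x (Fin.last (m + 1))) := by
        intro i
        have hne : i.castSucc ≠ Fin.last (m + 1) :=
          Fin.ne_of_lt (Fin.castSucc_lt_last i)
        simp [fIter, hne]
      rw [Finset.sum_congr rfl (fun i _ => hlast i), ← Finset.sum_mul,
        ih (fun i => x i.castSucc) (fun i => hx _), one_mul]
      have : fIter q (m + 2) x (Fin.last (m + 1)) =
          fFn q (x (Fin.last (m + 1)))
            (omegaIter q (m + 1) (fun i => x i.castSucc)) := by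
        simp [fIter]
      rw [this]
      exact fFn_add hq hω.1 hω.2 (hx _).1 (hx _).2

theorem sum_fIter_eq_one (q : ℝ) (hq : 2 ≤ q) (n : ℕ) (hn : 2 ≤ n)
    (x : Fin n → ℝ) (hx : ∀ i, 1 ≤ x i ∧ x i < q) :
    ∑ k, fIter q n x k = 1 := by
  obtain ⟨m, rfl⟩ : ∃ m, n = m + 1 := ⟨n - 1, by omega⟩
  exact sum_fIter_aux q (by linarith) m x
    (fun i => ⟨lt_of_lt_of_le one_pos (hx i).1, (hx i).2⟩)
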